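/- Let W̃ be the affine Weyl group W^σ ⋉ (c+ȟ)M of the fixed subalgebra ℊ^σ acting on 𝔥*_{σ,ℝ} by the shifted action w ⋆ λ = w·(λ + ρ_σ) − ρ_σ. For any element t ∈ T^{σ,reg}_c of the finite set of regular level-c torus points, any λ ∈ D_{c,σ}, and any w = z·τ_η ∈ W^†_{σ,c+ȟ} (z ∈ W^σ, η ∈ (c+ȟ)M), the restricted Weyl characters satisfy χ̄_{w⋆λ} = (−1)^{ℓ(w)} χ̄_λ on T^{σ,reg}_c. -/
import Mathlib


/-- Sign identity for restricted Weyl characters (Lemma on `χ̄_{w⋆λ}`).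
Setup: `H` is the weight lattice `P_σ` of `ℊ^σ`, `W` the finite Weyl group `W^σ` acting on
`H`, `ε` its sign character, `E x t = e^x(t)` the exponential pairing with the torus points
`t`, `Treg = T^{σ,reg}_c` the regular level-`c` torus points, `M` the lattice `(c+ȟ)M`
(`W`-orbits of which pair trivially with `T^σ_c`), `D` the Weyl denominator (nonvanishing
on regular points) and `χ` the Weyl characters (given by the Weyl character formula).
For `w = z·τ_η ∈ W^†_{σ,c+ȟ}` (`z ∈ W^σ`, `η ∈ (c+ȟ)M`), with `⋆` the shifted action
`w ⋆ λ = z•(λ + ρ_σ + η) − ρ_σ` and `(−1)^{ℓ(w)} = ε(z)` (the length of a translation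
being even), one has `χ̄_{w⋆λ} = (−1)^{ℓ(w)} χ̄_λ` on `T^{σ,reg}_c`. -/
theorem stmt10 (H : Type*) [AddCommGroup H]
    (W : Type*) [Group W] [Fintype W] [DistribMulAction W H]
    (ε : W →* ℂ)  -- the sign character of W^σ
    (T : Type*) (Treg : Set T)  -- T^σ and its regular level-c points T^{σ,reg}_c
    (E : H → T → ℂ) (hE : ∀ (x y : H) (t : T), E (x + y) t = E x t * E y t)
    (ρσ : H)  -- ρ_σ
    (M : AddSubgroup H)  -- the lattice (c+ȟ)M
    (hM : ∀ x ∈ M, ∀ (y : W), ∀ t ∈ Treg, E (y • x) t = 1)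
    (D : T → ℂ) (hD : ∀ t ∈ Treg, D t ≠ 0)  -- the Weyl denominator δ_σ
    (χ : H → T → ℂ)
    (hWeyl : ∀ (μ : H), ∀ t ∈ Treg,
      χ μ t * D t = ∑ y : W, ε y * E (y • (μ + ρσ)) t)  -- Weyl character formula
    (lam : H) (z : W) (η : H) (hη : η ∈ M)
    (ℓw : ℕ) (hℓ : ((-1 : ℂ)) ^ ℓw = ε z)  -- ℓ(w) ≡ ℓ(z) mod 2 since ℓ(τ_η) is even
    : ∀ t ∈ Treg, χ (z • (lam + ρσ + η) - ρσ) t = (-1 : ℂ) ^ ℓw * χ lam t := by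
  intro t ht
  have hz2 : ε z * ε z = 1 := by
    have : ((-1:ℂ))^ℓw * ((-1:ℂ))^ℓw = 1 := by
      rw [← pow_add, ← two_mul, pow_mul]; norm_num
    rw [hℓ] at this; exact this
  have key : χ (z • (lam + ρσ + η) - ρσ) t * D t = (ε z * χ lam t) * D t := by
    rw [hWeyl _ t ht]
    have h1 : ∀ y : W, ε y * E (y • (z • (lam + ρσ + η) - ρσ + ρσ)) t
        = ε z * (ε (y * z) * E ((y * z) • (lam + ρσ)) t) := by
      intro y
      have hη1 : E ((y * z) • η) t = 1 := hM η hη (y * z) t ht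
      have : y • (z • (lam + ρσ + η) - ρσ + ρσ) = (y * z) • (lam + ρσ) + (y * z) • η := by
        rw [sub_add_cancel, mul_smul, mul_smul, ← smul_add, ← smul_add]
      rw [this, hE, hη1, mul_one, map_mul]
      ring_nf
      rw [sq, hz2, mul_one]
    have hsum : (∑ i : W, ε (i * z) * E ((i * z) • (lam + ρσ)) t)
        = ∑ u : W, ε u * E (u • (lam + ρσ)) t :=
      Fintype.sum_equiv (Equiv.mulRight z) _ _ (fun i => rfl)
    rw [Finset.sum_congr rfl (fun y _ => h1 y), ← Finset.mul_sum, hsum, mul_assoc,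
      ← hWeyl lam t ht]
  have := mul_right_cancel₀ (hD t ht) key
  rw [this, hℓ]
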